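/- In the fused permutations algebra H_{k,n} (n ≥ 1), realized as P_k C[S_{k+n}] P_k with P_k the symmetrizer on the first k letters, the element σ_0 = P_k δ_k P_k satisfies σ_0^2 = (1/k) P_k + ((k-1)/k) σ_0; equivalently, (σ_0 - P_k)(σ_0 + (1/k) P_k) = 0, where P_k is the unit of the algebra. -/

import Mathlib

/-- The symmetrizer `P_k = (1/k!) ∑_{w ∈ S_k} w`, viewed inside the complex group algebra
`ℂ[S_{k+n}]` via the standard inclusion `S_k ⊂ S_{k+n}` (acting on the first `k` letters). -/
noncomputable def symmetrizer (k n : ℕ) : MonoidAlgebra ℂ (Equiv.Perm (Fin (k + n))) :=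
  ((k.factorial : ℂ))⁻¹ • ∑ w : Equiv.Perm (Fin k),
    MonoidAlgebra.of ℂ (Equiv.Perm (Fin (k + n)))
      (w.viaEmbedding (Fin.castLEEmb (Nat.le_add_right k n)))

open Equiv Equiv.Perm MulAction Finset

namespace Sigma0Aux

variable (k n : ℕ)

/-- the embedding of the first `k` letters. -/
def e : Fin k ↪ Fin (k + n) := Fin.castLEEmb (Nat.le_add_right k n)

/-- the induced inclusion of permutation groups. -/
noncomputable def ι : Perm (Fin k) →* Perm (Fin (k + n)) :=
  Equiv.Perm.viaEmbeddingHom (e k n)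

lemma iota_def (w : Perm (Fin k)) : ι k n w = w.viaEmbedding (e k n) := rfl

lemma iota_emb (w : Perm (Fin k)) (x : Fin k) : ι k n w (e k n x) = e k n (w x) :=
  Equiv.Perm.viaEmbedding_apply _ _ _

lemma iota_ge (w : Perm (Fin k)) (i : Fin (k + n)) (h : k ≤ i.val) : ι k n w i = i := by
  refine Equiv.Perm.viaEmbedding_apply_of_notMem _ _ _ ?_
  rintro ⟨x, rfl⟩
  exact absurd x.isLt (by simpa [e] using Nat.not_lt.mpr h)

noncomputable abbrev of' : Perm (Fin (k + n)) →* MonoidAlgebra ℂ (Perm (Fin (k + n))) :=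
  MonoidAlgebra.of ℂ (Perm (Fin (k + n)))

lemma symmetrizer_def : symmetrizer k n
    = ((k.factorial : ℂ))⁻¹ • ∑ w : Perm (Fin k), of' k n (ι k n w) := rfl

lemma P_mul_iota (u : Perm (Fin k)) : symmetrizer k n * of' k n (ι k n u) = symmetrizer k n := by
  rw [symmetrizer_def, smul_mul_assoc, Finset.sum_mul]
  congr 1
  refine Fintype.sum_equiv (Equiv.mulRight u) _ _ fun w => ?_
  simp [← map_mul]

lemma iota_mul_P (u : Perm (Fin k)) : of' k n (ι k n u) * symmetrizer k n = symmetrizer k n := by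
  rw [symmetrizer_def, mul_smul_comm, Finset.mul_sum]
  congr 1
  refine Fintype.sum_equiv (Equiv.mulLeft u) _ _ fun w => ?_
  simp [← map_mul]

lemma P_mul_P : symmetrizer k n * symmetrizer k n = symmetrizer k n := by
  nth_rewrite 2 [symmetrizer_def]
  rw [mul_smul_comm, Finset.mul_sum]
  have : ∀ w : Perm (Fin k), symmetrizer k n * of' k n (ι k n w) = symmetrizer k n :=
    P_mul_iota k n
  simp only [this, Finset.sum_const, Finset.card_univ, Fintype.card_perm, Fintype.card_fin]
  rw [← Nat.cast_smul_eq_nsmul ℂ, smul_smul, inv_mul_cancel₀ (by exact_mod_cast k.factorial_ne_zero), one_smul]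


/-- the distinguished point `k-1` inside `Fin k`. -/
def km (hk : 1 ≤ k) : Fin k := ⟨k - 1, by omega⟩

/-- the point `k-1` inside `Fin (k+n)`. -/
def aa (hk : 1 ≤ k) : Fin (k + n) := ⟨k - 1, by omega⟩

/-- the point `k` inside `Fin (k+n)`. -/
def bb (hn : 1 ≤ n) : Fin (k + n) := ⟨k, Nat.lt_add_of_pos_right hn⟩

variable (hk : 1 ≤ k) (hn : 1 ≤ n)

lemma e_val (x : Fin k) : (e k n x : Fin (k+n)).val = x.val := rfl

lemma e_km : e k n (km k hk) = aa k n hk := by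
  ext; simp [e_val, km, aa]

lemma e_ne_b (x : Fin k) : e k n x ≠ bb k n hn := by
  intro h
  have := congrArg Fin.val h
  rw [e_val] at this
  simp [bb] at this
  omega

lemma e_eq_a_iff (x : Fin k) : e k n x = aa k n hk ↔ x = km k hk := by
  constructor
  · intro h
    have := congrArg Fin.val h
    rw [e_val] at this
    simp [aa] at this
    exact Fin.ext (by simp [km, this])
  · rintro rfl; exact e_km k n hk

lemma a_ne_b : aa k n hk ≠ bb k n hn := by
  intro h; have := congrArg Fin.val h; simp [aa, bb] at this; omega

lemma iota_a (w : Perm (Fin k)) : ι k n w (aa k n hk) = e k n (w (km k hk)) := by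
  rw [← e_km k n hk, iota_emb]

lemma delta_conj_fix (w : Perm (Fin k)) (h : w (km k hk) = km k hk) :
    swap (aa k n hk) (bb k n hn) * ι k n w * swap (aa k n hk) (bb k n hn) = ι k n w := by
  refine Equiv.ext fun i => ?_
  simp only [Perm.mul_apply]
  rcases lt_or_ge i.val k with h1 | h1
  · obtain ⟨x, rfl⟩ : ∃ x : Fin k, i = e k n x := ⟨⟨i.val, h1⟩, by ext; simp [e_val]⟩
    by_cases h2 : x = km k hk
    · subst h2
      rw [e_km k n hk, swap_apply_left, iota_ge k n w (bb k n hn) (le_of_eq rfl),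
        swap_apply_right, ← e_km k n hk, iota_emb, h]
    · have hxa : e k n x ≠ aa k n hk := fun hc => h2 ((e_eq_a_iff k n hk x).mp hc)
      have hwxa : e k n (w x) ≠ aa k n hk := by
        intro hc
        exact h2 (w.injective (((e_eq_a_iff k n hk _).mp hc).trans h.symm))
      rw [swap_apply_of_ne_of_ne hxa (e_ne_b k n hn x), iota_emb,
        swap_apply_of_ne_of_ne hwxa (e_ne_b k n hn (w x))]
  · by_cases h2 : i = bb k n hn
    · subst h2
      rw [swap_apply_right, ← e_km k n hk, iota_emb, h, e_km k n hk, swap_apply_left,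
        iota_ge k n w (bb k n hn) (le_of_eq rfl)]
    · have hia : i ≠ aa k n hk := by
        intro hc; rw [hc] at h1; simp [aa] at h1; omega
      rw [swap_apply_of_ne_of_ne hia h2, iota_ge k n w i h1,
        swap_apply_of_ne_of_ne hia h2]

lemma delta_conj_nonfix (w : Perm (Fin k)) (h : w (km k hk) ≠ km k hk) :
    swap (aa k n hk) (bb k n hn) * ι k n w * swap (aa k n hk) (bb k n hn)
      = ι k n (swap (w (km k hk)) (km k hk)) * (swap (aa k n hk) (bb k n hn) * ι k n w) := by
  have heja : e k n (w (km k hk)) ≠ aa k n hk := fun hc => h ((e_eq_a_iff k n hk _).mp hc)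
  have hkb : k ≤ (bb k n hn : Fin (k+n)).val := le_of_eq rfl
  refine Equiv.ext fun i => ?_
  simp only [Perm.mul_apply]
  rcases lt_or_ge i.val k with h1 | h1
  · obtain ⟨x, rfl⟩ : ∃ x : Fin k, i = e k n x := ⟨⟨i.val, h1⟩, by ext; simp [e_val]⟩
    by_cases h2 : x = km k hk
    · subst h2
      -- LHS: δ (ι w (δ (e km))) ; RHS: ι s (δ (ι w (e km)))
      rw [e_km k n hk, swap_apply_left, iota_ge k n w (bb k n hn) hkb, swap_apply_right,
        iota_a k n hk w, swap_apply_of_ne_of_ne heja (e_ne_b k n hn _), iota_emb,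
        swap_apply_left, e_km k n hk]
    · have hxa : e k n x ≠ aa k n hk := fun hc => h2 ((e_eq_a_iff k n hk x).mp hc)
      rw [swap_apply_of_ne_of_ne hxa (e_ne_b k n hn x), iota_emb]
      by_cases h3 : w x = km k hk
      · rw [h3, e_km k n hk, swap_apply_left,
          iota_ge k n (swap (w (km k hk)) (km k hk)) (bb k n hn) hkb]
      · have hwxa : e k n (w x) ≠ aa k n hk := fun hc => h3 ((e_eq_a_iff k n hk _).mp hc)
        rw [swap_apply_of_ne_of_ne hwxa (e_ne_b k n hn (w x)), iota_emb]
        have hs : swap (w (km k hk)) (km k hk) (w x) = w x :=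
          swap_apply_of_ne_of_ne (fun hc => h2 (w.injective hc)) h3
        rw [hs]
  · by_cases h2 : i = bb k n hn
    · subst h2
      rw [swap_apply_right, iota_a k n hk w,
        swap_apply_of_ne_of_ne heja (e_ne_b k n hn _),
        iota_ge k n w (bb k n hn) hkb, swap_apply_right, iota_a k n hk _,
        swap_apply_right]
    · have hia : i ≠ aa k n hk := by
        intro hc; rw [hc] at h1; simp [aa] at h1; omega
      rw [swap_apply_of_ne_of_ne hia h2, iota_ge k n w i h1,
        swap_apply_of_ne_of_ne hia h2, iota_ge k n (swap (w (km k hk)) (km k hk)) i h1]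

lemma card_fix_mul :
    ((Finset.univ.filter (fun w : Perm (Fin k) => w (km k hk) = km k hk)).card) * k
      = k.factorial := by
  classical
  haveI : MulAction.IsPretransitive (Perm (Fin k)) (Fin k) :=
    ⟨fun x y => ⟨swap x y, by simp⟩⟩
  have horb : MulAction.orbit (Perm (Fin k)) (km k hk) = Set.univ :=
    MulAction.orbit_eq_univ _ _
  have h1 : Fintype.card (MulAction.orbit (Perm (Fin k)) (km k hk)) = k := by
    rw [Fintype.card_congr (Equiv.setCongr horb),
      Fintype.card_congr (Equiv.Set.univ _), Fintype.card_fin]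
  have h2 : Fintype.card (MulAction.stabilizer (Perm (Fin k)) (km k hk))
      = (Finset.univ.filter (fun w : Perm (Fin k) => w (km k hk) = km k hk)).card := by
    rw [Fintype.card_subtype]
    congr 1
  have h3 := MulAction.card_orbit_mul_card_stabilizer_eq_card_group
    (Perm (Fin k)) (km k hk)
  rw [h1, h2, Fintype.card_perm, Fintype.card_fin] at h3
  rw [mul_comm]
  exact h3

/-- abbreviation for the image of `δ` in the group algebra. -/
noncomputable def D : MonoidAlgebra ℂ (Perm (Fin (k + n))) :=
  of' k n (swap (aa k n hk) (bb k n hn))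

lemma middle_P (X Y : MonoidAlgebra ℂ (Perm (Fin (k + n)))) :
    X * symmetrizer k n * Y
      = ((k.factorial : ℂ))⁻¹ • ∑ w : Perm (Fin k), X * of' k n (ι k n w) * Y := by
  rw [symmetrizer_def, mul_smul_comm, smul_mul_assoc, Finset.mul_sum, Finset.sum_mul]

lemma term_eval (w : Perm (Fin k)) :
    (symmetrizer k n * D k n hk hn) * of' k n (ι k n w) * (D k n hk hn * symmetrizer k n)
      = if w (km k hk) = km k hk then symmetrizer k n
        else symmetrizer k n * D k n hk hn * symmetrizer k n := by
  have key : (symmetrizer k n * D k n hk hn) * of' k n (ι k n w) * (D k n hk hn * symmetrizer k n)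
      = symmetrizer k n * of' k n
          (swap (aa k n hk) (bb k n hn) * ι k n w * swap (aa k n hk) (bb k n hn))
          * symmetrizer k n := by
    simp only [map_mul, D, mul_assoc]
  by_cases h : w (km k hk) = km k hk
  · rw [if_pos h, key, delta_conj_fix k n hk hn w h, P_mul_iota, P_mul_P]
  · rw [if_neg h, key, delta_conj_nonfix k n hk hn w h]
    simp only [map_mul]
    have regroup :
        symmetrizer k n * (of' k n (ι k n (swap (w (km k hk)) (km k hk)))
            * (of' k n (swap (aa k n hk) (bb k n hn)) * of' k n (ι k n w))) * symmetrizer k n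
          = (symmetrizer k n * of' k n (ι k n (swap (w (km k hk)) (km k hk))))
            * (of' k n (swap (aa k n hk) (bb k n hn)) * (of' k n (ι k n w) * symmetrizer k n)) := by
      simp only [mul_assoc]
    rw [regroup, P_mul_iota, iota_mul_P]
    simp only [D, mul_assoc]

lemma sigma_sq :
    (symmetrizer k n * D k n hk hn * symmetrizer k n)
        * (symmetrizer k n * D k n hk hn * symmetrizer k n)
      = (k : ℂ)⁻¹ • symmetrizer k n
        + (((k : ℂ) - 1) / (k : ℂ)) • (symmetrizer k n * D k n hk hn * symmetrizer k n) := by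
  have hk0 : (k : ℂ) ≠ 0 := Nat.cast_ne_zero.mpr (by omega)
  have hf0 : ((k.factorial : ℕ) : ℂ) ≠ 0 := Nat.cast_ne_zero.mpr k.factorial_ne_zero
  have step1 : (symmetrizer k n * D k n hk hn * symmetrizer k n)
      * (symmetrizer k n * D k n hk hn * symmetrizer k n)
      = (symmetrizer k n * D k n hk hn) * symmetrizer k n * (D k n hk hn * symmetrizer k n) := by
    have : (symmetrizer k n * D k n hk hn * symmetrizer k n)
        * (symmetrizer k n * D k n hk hn * symmetrizer k n)
        = (symmetrizer k n * D k n hk hn) * (symmetrizer k n * symmetrizer k n)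
          * (D k n hk hn * symmetrizer k n) := by
      simp only [mul_assoc]
    rw [this, P_mul_P]
  rw [step1, middle_P,
    show (∑ w : Perm (Fin k), (symmetrizer k n * D k n hk hn) * of' k n (ι k n w)
        * (D k n hk hn * symmetrizer k n))
      = ∑ w : Perm (Fin k), (if w (km k hk) = km k hk then symmetrizer k n
          else symmetrizer k n * D k n hk hn * symmetrizer k n) from
      Finset.sum_congr rfl fun w _ => term_eval k n hk hn w,
    Finset.sum_ite, Finset.sum_const, Finset.sum_const]
  set cfix := (Finset.univ.filter (fun w : Perm (Fin k) => w (km k hk) = km k hk)).card with hcf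
  set cnon := (Finset.univ.filter (fun w : Perm (Fin k) => ¬ w (km k hk) = km k hk)).card with hcn
  have hcards : cfix * k = k.factorial := card_fix_mul k hk
  have hadd : cfix + cnon = k.factorial := by
    rw [hcf, hcn, Finset.card_filter_add_card_filter_not, Finset.card_univ,
      Fintype.card_perm, Fintype.card_fin]
  have hc : (cfix : ℂ) * (k : ℂ) = ((k.factorial : ℕ) : ℂ) := by exact_mod_cast hcards
  have hsum : (cfix : ℂ) + (cnon : ℂ) = ((k.factorial : ℕ) : ℂ) := by exact_mod_cast hadd
  rw [smul_add, ← Nat.cast_smul_eq_nsmul ℂ, ← Nat.cast_smul_eq_nsmul ℂ, smul_smul, smul_smul]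
  have c1 : ((k.factorial : ℕ) : ℂ)⁻¹ * (cfix : ℂ) = (k : ℂ)⁻¹ := by
    field_simp
    linear_combination hc
  have c2 : ((k.factorial : ℕ) : ℂ)⁻¹ * (cnon : ℂ) = ((k : ℂ) - 1) / (k : ℂ) := by
    field_simp
    linear_combination (k : ℂ) * hsum - hc
  rw [c1, c2]

lemma sigma_factored :
    (symmetrizer k n * D k n hk hn * symmetrizer k n - symmetrizer k n)
      * (symmetrizer k n * D k n hk hn * symmetrizer k n + (k : ℂ)⁻¹ • symmetrizer k n)
      = 0 := by
  have hk0 : (k : ℂ) ≠ 0 := Nat.cast_ne_zero.mpr (by omega)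
  have h1 := sigma_sq k n hk hn
  have hl : symmetrizer k n * (symmetrizer k n * D k n hk hn * symmetrizer k n)
      = symmetrizer k n * D k n hk hn * symmetrizer k n := by
    have : symmetrizer k n * (symmetrizer k n * D k n hk hn * symmetrizer k n)
        = (symmetrizer k n * symmetrizer k n) * D k n hk hn * symmetrizer k n := by
      simp only [mul_assoc]
    rw [this, P_mul_P]
  have hr : (symmetrizer k n * D k n hk hn * symmetrizer k n) * symmetrizer k n
      = symmetrizer k n * D k n hk hn * symmetrizer k n := by
    rw [mul_assoc (symmetrizer k n * D k n hk hn), P_mul_P]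
  have hco : ((k : ℂ) - 1) / (k : ℂ) = 1 - (k : ℂ)⁻¹ := by
    field_simp
  rw [sub_mul, mul_add, mul_add, mul_smul_comm, mul_smul_comm, h1, hr, hl, P_mul_P, hco]
  module

end Sigma0Aux

/-- In `H_{k,n} = P_k ℂ[S_{k+n}] P_k`, the element `σ₀ = P_k δ_k P_k` (with `δ_k` the
transposition of the 1-based points `k, k+1`, i.e. the 0-based points `k-1, k`) satisfies
`σ₀² = (1/k) P_k + ((k-1)/k) σ₀`; equivalently `(σ₀ - P_k)(σ₀ + (1/k) P_k) = 0`,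
where `P_k` is the unit of the algebra. -/
theorem sigma0_quadratic (k n : ℕ) (hk : 1 ≤ k) (hn : 1 ≤ n) :
    let P := symmetrizer k n
    let σ₀ := P * MonoidAlgebra.of ℂ (Equiv.Perm (Fin (k + n)))
      (Equiv.swap (⟨k - 1, by omega⟩ : Fin (k + n)) ⟨k, by omega⟩) * P
    σ₀ * σ₀ = (k : ℂ)⁻¹ • P + (((k : ℂ) - 1) / (k : ℂ)) • σ₀ ∧
      (σ₀ - P) * (σ₀ + (k : ℂ)⁻¹ • P) = 0 := by
  intro P σ₀
  have hP : P = symmetrizer k n := rfl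
  have hσ : σ₀ = symmetrizer k n * Sigma0Aux.D k n hk hn * symmetrizer k n := rfl
  constructor
  · rw [hσ, hP]
    exact Sigma0Aux.sigma_sq k n hk hn
  · rw [hσ, hP]
    exact Sigma0Aux.sigma_factored k n hk hn
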